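/- Let η be the Minkowski bilinear form on ℝ⁴, η(x, y) = x₀y₀ − x₁y₁ − x₂y₂ − x₃y₃, and let A : ℝ⁴ → ℝ⁴ be a linear map that is η-self-adjoint (η(Ax, y) = η(x, Ay) for all x, y) and diagonalizable over ℝ (ℝ⁴ has a basis of eigenvectors of A). Then for any K ∈ ℝ⁴, the four vectors K, A·K, A²·K, A³·K are linearly dependent if and only if there exists a nonzero eigenvector v of A with η(v, K) = 0. -/

import Mathlib

noncomputable def mink (v : Fin 4 → ℝ) : (Fin 4 → ℝ) →ₗ[ℝ] ℝ :=
  v 0 • LinearMap.proj 0 - v 1 • LinearMap.proj 1 - v 2 • LinearMap.proj 2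
    - v 3 • LinearMap.proj 3

lemma mink_apply (v y : Fin 4 → ℝ) :
    mink v y = v 0 * y 0 - v 1 * y 1 - v 2 * y 2 - v 3 * y 3 := by
  simp [mink]

lemma mink_smul_left (t : ℝ) (x y : Fin 4 → ℝ) :
    mink (t • x) y = t * mink x y := by
  simp [mink_apply]; ring

lemma mink_sub_smul_left (t : ℝ) (x y z : Fin 4 → ℝ) :
    mink (x - t • y) z = mink x z - t * mink y z := by
  simp [mink_apply]; ring


/-- The reparametrization-invariant criterion (eq. (9) of the paper): for an
`η`-self-adjoint, real-diagonalizable operator `A` on Minkowski `ℝ⁴`, the vectors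
`K, AK, A²K, A³K` are linearly dependent iff `A` has an eigenvector `η`-orthogonal
to `K`. -/
theorem stmt_8 (η : (Fin 4 → ℝ) → (Fin 4 → ℝ) → ℝ)
    (hη : ∀ x y, η x y = x 0 * y 0 - x 1 * y 1 - x 2 * y 2 - x 3 * y 3)
    (A : (Fin 4 → ℝ) →ₗ[ℝ] (Fin 4 → ℝ))
    (hsa : ∀ x y, η (A x) y = η x (A y))
    (hdiag : ∃ b : Module.Basis (Fin 4) ℝ (Fin 4 → ℝ), ∀ i, ∃ lam : ℝ, A (b i) = lam • b i)
    (K : Fin 4 → ℝ) :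
    ¬ LinearIndependent ℝ ![K, A K, A (A K), A (A (A K))] ↔
      ∃ v : Fin 4 → ℝ, v ≠ 0 ∧ (∃ lam : ℝ, A v = lam • v) ∧ η v K = 0 := by
  have hmink : ∀ x y, η x y = mink x y := fun x y => by rw [hη, mink_apply]
  obtain ⟨b, hb⟩ := hdiag
  choose lam hlam using hb
  constructor
  · -- forward: dependence ⇒ orthogonal eigenvector, by contradiction
    intro hdep
    by_contra hno
    push_neg at hno
    apply hdep
    -- every basis eigenvector pairs nontrivially with K
    have hbiK : ∀ i, η (b i) K ≠ 0 := fun i =>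
      hno (b i) (b.ne_zero i) ⟨lam i, hlam i⟩
    -- all eigenvalues are distinct
    have hinj : Function.Injective lam := by
      intro i j hij
      by_contra hne
      set t : ℝ := η (b i) K / η (b j) K with ht
      have hv : A (b i - t • b j) = lam i • (b i - t • b j) := by
        rw [map_sub, map_smul, hlam i, hlam j, ← hij, smul_sub, smul_smul,
          smul_smul, mul_comm]
      have hne0 : b i - t • b j ≠ 0 := by
        intro h0
        have h1 := congrArg (fun x => b.repr x i) h0
        simp [Finsupp.single_apply, Ne.symm hne] at h1
      have h2 := hno _ hne0 ⟨lam i, hv⟩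
      apply h2
      rw [hmink, mink_sub_smul_left, ← hmink, ← hmink, ht,
        div_mul_cancel₀ _ (hbiK j), sub_self]
    -- orthogonality of distinct basis eigenvectors
    have hortho : ∀ i j, i ≠ j → η (b i) (b j) = 0 := by
      intro i j hij
      have h1 := hsa (b i) (b j)
      rw [hlam i, hlam j, hmink, hmink, mink_smul_left, map_smul,
        smul_eq_mul] at h1
      have h2 : (lam i - lam j) * mink (b i) (b j) = 0 := by linarith
      have h3 : lam i - lam j ≠ 0 := sub_ne_zero.mpr fun h => hij (hinj h)
      rw [hmink]
      exact (mul_eq_zero.mp h2).resolve_left h3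
    -- coordinates of K are all nonzero
    have hci : ∀ i, b.repr K i ≠ 0 := by
      intro i h0
      apply hbiK i
      rw [hmink]
      conv_lhs => rw [← b.sum_repr K]
      rw [map_sum]
      refine Finset.sum_eq_zero fun j _ => ?_
      rcases eq_or_ne j i with rfl | hji
      · simp [h0]
      · rw [map_smul, smul_eq_mul, ← hmink, hortho i j (Ne.symm hji), mul_zero]
    -- action of A on coordinates
    have hrepr : ∀ x i, b.repr (A x) i = lam i * b.repr x i := by
      intro x i
      have hx : A x = ∑ j, (lam j * b.repr x j) • b j := by
        conv_lhs => rw [← b.sum_repr x, map_sum]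
        refine Finset.sum_congr rfl fun j _ => ?_
        rw [map_smul, hlam j, smul_smul, mul_comm]
      rw [hx]
      simp [Finsupp.single_apply]
    -- prove linear independence
    rw [Fintype.linearIndependent_iff]
    intro a ha
    have hval : ∀ i, a 0 + a 1 * lam i + a 2 * lam i ^ 2 + a 3 * lam i ^ 3 = 0 := by
      intro i
      have hi := congrArg (fun x => b.repr x i) ha
      simp only [Fin.sum_univ_four, Matrix.cons_val_zero, Matrix.cons_val_one,
        Matrix.head_cons, Matrix.cons_val_two, Matrix.tail_cons,
        Matrix.cons_val_three, map_add, map_smul, Finsupp.coe_add,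
        Finsupp.coe_smul, Pi.add_apply, Pi.smul_apply, smul_eq_mul,
        map_zero, Finsupp.coe_zero, Pi.zero_apply, hrepr] at hi
      have h2 : b.repr K i *
          (a 0 + a 1 * lam i + a 2 * lam i ^ 2 + a 3 * lam i ^ 3) = 0 := by
        linear_combination hi
      exact (mul_eq_zero.mp h2).resolve_left (hci i)
    have hmv : Matrix.mulVec (Matrix.vandermonde lam) a = 0 := by
      funext i
      simp only [Matrix.mulVec, Matrix.vandermonde_apply, dotProduct,
        Fin.sum_univ_four, show ((0 : Fin 4) : ℕ) = 0 from rfl,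
        show ((1 : Fin 4) : ℕ) = 1 from rfl, show ((2 : Fin 4) : ℕ) = 2 from rfl,
        show ((3 : Fin 4) : ℕ) = 3 from rfl, Pi.zero_apply]
      linear_combination hval i
    have hdet : (Matrix.vandermonde lam).det ≠ 0 :=
      Matrix.det_vandermonde_ne_zero_iff.mpr hinj
    have := Matrix.eq_zero_of_mulVec_eq_zero hdet hmv
    intro i; rw [this]; rfl
  · -- backward: orthogonal eigenvector ⇒ dependence
    rintro ⟨v, hv0, ⟨μ, hμ⟩, hvK⟩ hli
    -- the functional mink v kills all four vectors
    have hstep : ∀ x, mink v x = 0 → mink v (A x) = 0 := by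
      intro x hx
      rw [← hmink, ← hsa, hμ, hmink, mink_smul_left, hx, mul_zero]
    have h0 : mink v K = 0 := by rw [← hmink]; exact hvK
    have h1 : mink v (A K) = 0 := hstep _ h0
    have h2 : mink v (A (A K)) = 0 := hstep _ h1
    have h3 : mink v (A (A (A K))) = 0 := hstep _ h2
    -- the four vectors span everything
    have hcard : Fintype.card (Fin 4) =
        Module.finrank ℝ (Fin 4 → ℝ) := by
      simp [Module.finrank_fin_fun]
    have hspan := hli.span_eq_top_of_card_eq_finrank hcard
    -- hence mink v = 0
    have hker : ∀ x, mink v x = 0 := by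
      intro x
      have hx : x ∈ Submodule.span ℝ (Set.range ![K, A K, A (A K), A (A (A K))]) := by
        rw [hspan]; trivial
      refine Submodule.span_induction ?_ ?_ ?_ ?_ hx
      · rintro y ⟨i, rfl⟩
        fin_cases i <;> simpa using ‹_›
      · simp
      · intro y z _ _ hy hz; rw [map_add, hy, hz, add_zero]
      · intro c y _ hy; rw [map_smul, hy, smul_zero]
    -- but mink v applied to a suitable vector is a positive sum of squares
    have hw : mink v ![v 0, -v 1, -v 2, -v 3] =
        v 0 ^ 2 + v 1 ^ 2 + v 2 ^ 2 + v 3 ^ 2 := by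
      rw [mink_apply]; simp; ring
    have := hker ![v 0, -v 1, -v 2, -v 3]
    rw [hw] at this
    apply hv0
    have e0 : v 0 = 0 := by nlinarith [sq_nonneg (v 0), sq_nonneg (v 1), sq_nonneg (v 2), sq_nonneg (v 3)]
    have e1 : v 1 = 0 := by nlinarith [sq_nonneg (v 0), sq_nonneg (v 1), sq_nonneg (v 2), sq_nonneg (v 3)]
    have e2 : v 2 = 0 := by nlinarith [sq_nonneg (v 0), sq_nonneg (v 1), sq_nonneg (v 2), sq_nonneg (v 3)]
    have e3 : v 3 = 0 := by nlinarith [sq_nonneg (v 0), sq_nonneg (v 1), sq_nonneg (v 2), sq_nonneg (v 3)]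
    funext i
    fin_cases i <;> simpa using (by assumption : _ = (0:ℝ))
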